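/- Let L be an n×n invertible SDDM matrix, fix w ∈ [n] and a threshold c > 0, and let T := {k ∈ [n] : (L⁻¹ e^{(w)})_k ≥ c} be the level set of the solution to L x = e^{(w)}. Let G be the graph on [n] with an edge between i ≠ j whenever L_{ij} ≠ 0. Then for every y ∈ T, the vertices y and w lie in the same connected component of the subgraph of G induced on T; that is, there exists a path y = k₀, k₁, …, k_p = w in G with (L⁻¹ e^{(w)})_{k_g} ≥ c for every g ∈ {0, 1, …, p}. -/

import Mathlib

/-- Let `L` be an `n × n` invertible SDDM matrix, fix `w` and a threshold
`c > 0`, and let `T := {k : (L⁻¹ e⁽ʷ⁾)_k ≥ c}`.  In the graph on `[n]` with an edge between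
`i ≠ j` whenever `L i j ≠ 0`, every `y ∈ T` is joined to `w` by a path
`y = k₀, k₁, …, k_p = w` all of whose vertices lie in `T`. -/
theorem sddm_level_set_connected {n : ℕ}
    (L : Matrix (Fin n) (Fin n) ℝ)
    (hsymm : L.IsSymm)
    (hoff : ∀ i j, i ≠ j → L i j ≤ 0)
    (hdiag : ∀ i, 0 < L i i)
    (hdd : ∀ i, ∑ j ∈ Finset.univ.filter (fun j => j ≠ i), |L i j| ≤ L i i)
    (hinv : IsUnit L)
    (w : Fin n) (c : ℝ) (hc : 0 < c)
    (y : Fin n) (hy : c ≤ L⁻¹.mulVec (Pi.single w 1) y) :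
    ∃ (p : ℕ) (k : ℕ → Fin n), k 0 = y ∧ k p = w ∧
      (∀ g < p, k g ≠ k (g + 1) ∧ L (k g) (k (g + 1)) ≠ 0) ∧
      (∀ g ≤ p, c ≤ L⁻¹.mulVec (Pi.single w 1) (k g)) := by
  classical
  set x : Fin n → ℝ := L⁻¹.mulVec (Pi.single w 1) with hxdef
  have hdet : IsUnit L.det := (Matrix.isUnit_iff_isUnit_det L).mp hinv
  have hLx : L.mulVec x = Pi.single w 1 := by
    rw [hxdef, Matrix.mulVec_mulVec, Matrix.mul_nonsing_inv L hdet, Matrix.one_mulVec]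
  set R : Fin n → Fin n → Prop := fun i j => i ≠ j ∧ L i j ≠ 0 ∧ c ≤ x j with hRdef
  -- main claim : w is reachable from y within the level set
  have main : Relation.ReflTransGen R y w := by
    by_contra hw
    set C : Finset (Fin n) := Finset.univ.filter (fun k => Relation.ReflTransGen R y k) with hCdef
    have hyC : y ∈ C := Finset.mem_filter.mpr ⟨Finset.mem_univ y, Relation.ReflTransGen.refl⟩
    have hCmem : ∀ i, i ∈ C ↔ Relation.ReflTransGen R y i := by
      intro i; simp [hCdef]
    have hCx : ∀ i ∈ C, c ≤ x i := by
      intro i hi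
      rcases ((hCmem i).mp hi).cases_tail with h | ⟨b, _, hb⟩
      · rw [h]; exact hy
      · exact hb.2.2
    have hclosed : ∀ i ∈ C, ∀ j, i ≠ j → L i j ≠ 0 → c ≤ x j → j ∈ C := by
      intro i hi j h1 h2 h3
      exact (hCmem j).mpr (((hCmem i).mp hi).tail ⟨h1, h2, h3⟩)
    have hwC : ∀ i ∈ C, i ≠ w := by
      rintro i hi rfl; exact hw ((hCmem i).mp hi)
    have hzero : ∀ i ∈ C, ∑ j, L i j * x j = 0 := by
      intro i hi
      have h1 : L.mulVec x i = 0 := by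
        rw [hLx]; exact Pi.single_eq_of_ne (hwC i hi) 1
      rw [← h1]; simp [Matrix.mulVec, dotProduct]
    -- pick the maximizer
    obtain ⟨i₀, hi₀C, hmax⟩ := C.exists_max_image x ⟨y, hyC⟩
    set m : ℝ := x i₀ with hmdef
    have hcm : c ≤ m := hCx i₀ hi₀C
    have hm0 : 0 < m := lt_of_lt_of_le hc hcm
    set A : Finset (Fin n) := C.filter (fun k => x k = m) with hAdef
    have hi₀A : i₀ ∈ A := by simp [hAdef, hi₀C]; rfl
    -- step 2 : neighbors of A lie in A, and dominance is tight on A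
    have step2 : ∀ i ∈ A, (∀ j, j ≠ i → L i j ≠ 0 → j ∈ A) ∧
        (∑ j ∈ Finset.univ.erase i, (-L i j) = L i i) := by
      intro i hiA
      have hiC : i ∈ C := (Finset.mem_filter.mp hiA).1
      have hxi : x i = m := (Finset.mem_filter.mp hiA).2
      have h0 : L i i * m + ∑ j ∈ Finset.univ.erase i, L i j * x j = 0 := by
        rw [← hxi, Finset.add_sum_erase Finset.univ (fun j => L i j * x j)
          (Finset.mem_univ i)]
        exact hzero i hiC
      have hsum_eq : L i i * m = ∑ j ∈ Finset.univ.erase i, (-L i j) * x j := by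
        have : ∑ j ∈ Finset.univ.erase i, (-L i j) * x j
            = -∑ j ∈ Finset.univ.erase i, L i j * x j := by
          rw [← Finset.sum_neg_distrib]; exact Finset.sum_congr rfl (by intros; ring)
        rw [this]; linarith
      have hterm : ∀ j ∈ Finset.univ.erase i, (-L i j) * x j ≤ (-L i j) * m := by
        intro j hj
        have hji : j ≠ i := (Finset.mem_erase.mp hj).1
        by_cases hL : L i j = 0
        · simp [hL]
        · have hpos : 0 < -L i j := by
            have := hoff i j (Ne.symm hji); cases lt_or_eq_of_le this with
            | inl h => linarith
            | inr h => exact absurd h hL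
          have hxjm : x j ≤ m := by
            by_cases hjC : j ∈ C
            · exact hmax j hjC
            · by_contra hlt
              push_neg at hlt
              exact hjC (hclosed i hiC j (Ne.symm hji) hL (le_trans hcm (le_of_lt hlt)))
          exact mul_le_mul_of_nonneg_left hxjm (le_of_lt hpos)
      have habs : ∀ j ∈ Finset.univ.erase i, -L i j = |L i j| := by
        intro j hj
        exact (abs_of_nonpos (hoff i j (Ne.symm (Finset.mem_erase.mp hj).1))).symm
      have hddm : ∑ j ∈ Finset.univ.erase i, (-L i j) ≤ L i i := by
        calc ∑ j ∈ Finset.univ.erase i, (-L i j)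
            = ∑ j ∈ Finset.univ.erase i, |L i j| := Finset.sum_congr rfl habs
          _ = ∑ j ∈ Finset.univ.filter (fun j => j ≠ i), |L i j| := by
              rw [Finset.filter_ne' Finset.univ i]
          _ ≤ L i i := hdd i
      have hsum_le : ∑ j ∈ Finset.univ.erase i, (-L i j) * m ≤ L i i * m := by
        rw [← Finset.sum_mul]
        exact mul_le_mul_of_nonneg_right hddm (le_of_lt hm0)
      have hsq : ∑ j ∈ Finset.univ.erase i, (-L i j) * x j
          = ∑ j ∈ Finset.univ.erase i, (-L i j) * m := by
        have h1 : ∑ j ∈ Finset.univ.erase i, (-L i j) * m ≤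
            ∑ j ∈ Finset.univ.erase i, (-L i j) * x j := by
          rw [← hsum_eq]; exact hsum_le
        exact le_antisymm (Finset.sum_le_sum hterm) h1
      have htermeq : ∀ j ∈ Finset.univ.erase i, (-L i j) * x j = (-L i j) * m :=
        (Finset.sum_eq_sum_iff_of_le hterm).mp hsq
      constructor
      · intro j hji hL
        have hj : j ∈ Finset.univ.erase i := Finset.mem_erase.mpr ⟨hji, Finset.mem_univ j⟩
        have hpos : -L i j ≠ 0 := by
          intro h; exact hL (by linarith [neg_eq_zero.mp h])
        have hxj : x j = m := mul_left_cancel₀ hpos (htermeq j hj)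
        have hjC : j ∈ C := hclosed i hiC j (Ne.symm hji) hL (hxj ▸ hcm)
        exact Finset.mem_filter.mpr ⟨hjC, hxj⟩
      · have : (∑ j ∈ Finset.univ.erase i, (-L i j)) * m = L i i * m := by
          rw [Finset.sum_mul, ← hsq, ← hsum_eq]
        exact mul_right_cancel₀ (ne_of_gt hm0) this
    -- step 3 : the indicator of A is in the kernel of L
    set u : Fin n → ℝ := fun k => if k ∈ A then 1 else 0 with hudef
    have hLu : L.mulVec u = 0 := by
      funext i
      have hform : L.mulVec u i = ∑ j ∈ A, L i j := by
        have : L.mulVec u i = ∑ j, L i j * u j := by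
          simp [Matrix.mulVec, dotProduct]
        rw [this]
        rw [show (∑ j, L i j * u j) = ∑ j, (if j ∈ A then L i j else 0) by
          exact Finset.sum_congr rfl (fun j _ => by by_cases h : j ∈ A <;> simp [hudef, h])]
        rw [Finset.sum_ite_mem Finset.univ A (fun j => L i j), Finset.univ_inter]
      rw [hform]
      by_cases hiA : i ∈ A
      · obtain ⟨hnb, htight⟩ := step2 i hiA
        have h1 : ∑ j ∈ A, L i j = L i i + ∑ j ∈ A.erase i, L i j := by
          rw [Finset.add_sum_erase A (fun j => L i j) hiA]
        have h2 : ∑ j ∈ A.erase i, L i j = ∑ j ∈ Finset.univ.erase i, L i j := by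
          apply Finset.sum_subset
          · exact Finset.erase_subset_erase i (Finset.subset_univ A)
          · intro j hj hjA
            by_contra hL
            exact hjA (Finset.mem_erase.mpr ⟨(Finset.mem_erase.mp hj).1,
              hnb j (Finset.mem_erase.mp hj).1 hL⟩)
        have h3 : ∑ j ∈ Finset.univ.erase i, L i j = -(L i i) := by
          rw [← htight, ← Finset.sum_neg_distrib]
          exact Finset.sum_congr rfl (by intros; ring)
        rw [h1, h2, h3]; simp
      · apply Finset.sum_eq_zero
        intro j hj
        by_contra hL
        rcases eq_or_ne j i with rfl | hji
        · exact hiA hj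
        · have : L j i ≠ 0 := by
            rw [hsymm.apply i j]; exact hL
          exact hiA ((step2 j hj).1 i hji.symm this)
    have hu0 : u = 0 := by
      have : L⁻¹.mulVec (L.mulVec u) = u := by
        rw [Matrix.mulVec_mulVec, Matrix.nonsing_inv_mul L hdet, Matrix.one_mulVec]
      rw [← this, hLu, Matrix.mulVec_zero]
    have : u i₀ = 1 := by simp [hudef, hi₀A]
    rw [hu0] at this
    exact one_ne_zero this.symm
  -- extract an explicit path from reachability
  have extract : ∀ z, Relation.ReflTransGen R y z → ∃ (p : ℕ) (k : ℕ → Fin n),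
      k 0 = y ∧ k p = z ∧
      (∀ g < p, k g ≠ k (g + 1) ∧ L (k g) (k (g + 1)) ≠ 0) ∧
      (∀ g ≤ p, c ≤ x (k g)) := by
    intro z hz
    induction hz with
    | refl =>
      exact ⟨0, fun _ => y, rfl, rfl, fun g hg => absurd hg (Nat.not_lt_zero g),
        fun g _ => hy⟩
    | @tail b d hb hbd ih =>
      obtain ⟨p, k, hk0, hkp, hedge, hT⟩ := ih
      refine ⟨p + 1, fun g => if g ≤ p then k g else d, ?_, ?_, ?_, ?_⟩
      · simp [hk0]
      · simp
      · intro g hg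
        by_cases hgp : g < p
        · have h1 : g ≤ p := le_of_lt hgp
          have h2 : g + 1 ≤ p := hgp
          simp only [if_pos h1, if_pos h2]
          exact hedge g hgp
        · have hgeq : g = p := by omega
          subst hgeq
          simp only [le_refl, if_pos, if_neg (by omega : ¬ g + 1 ≤ g)]
          rw [hkp]
          exact ⟨hbd.1, hbd.2.1⟩
      · intro g hg
        by_cases hgp : g ≤ p
        · simp only [if_pos hgp]; exact hT g hgp
        · simp only [if_neg hgp]; exact hbd.2.2
  exact extract w main
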